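/- For the case $k = 2$: if $0 < p_1, p_2 < \infty$, $\alpha_1, \alpha_2 > -1$, $\lambda = 1/p_1 + 1/p_2$ and $\gamma = \frac{1}{\lambda}(\alpha_1/p_1 + \alpha_2/p_2)$, then for holomorphic $f \in A^{p_1}_{\alpha_1}$ and $g \in A^{p_2}_{\alpha_2}$, the product $fg$ lies in $A^{1/\lambda}_\gamma$ with $\|fg\|_{1/\lambda,\gamma} \lesssim \|f\|_{p_1,\alpha_1} \|g\|_{p_2,\alpha_2}$. -/

import Mathlib

open MeasureTheory

noncomputable section

abbrev Cn (n : ℕ) := EuclideanSpace ℂ (Fin n)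


noncomputable instance (n : ℕ) : MeasurableSpace (Cn n) := borel _
instance (n : ℕ) : BorelSpace (Cn n) := ⟨rfl⟩
noncomputable instance (n : ℕ) : MeasureSpace (Cn n) := ⟨MeasureTheory.Measure.addHaar⟩

def B (n : ℕ) : Set (Cn n) := Metric.ball 0 1

def bdot {n : ℕ} (z w : Cn n) : ℂ := ∑ j, z j * (starRingEnd ℂ) (w j)

def vol (n : ℕ) (α : ℝ) : Measure (Cn n) :=
  (volume.restrict (B n)).withDensity fun z => ENNReal.ofReal ((1 - ‖z‖ ^ 2) ^ α)

def Hol {n : ℕ} (f : Cn n → ℂ) : Prop := DifferentiableOn ℂ f (B n)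

def bNorm (n : ℕ) (p α : ℝ) (f : Cn n → ℂ) : ℝ :=
  (∫ z, ‖f z‖ ^ p ∂(vol n α)) ^ (1 / p)

def InBergman (n : ℕ) (p α : ℝ) (f : Cn n → ℂ) : Prop :=
  Hol f ∧ Integrable (fun z => ‖f z‖ ^ p) (vol n α)

def rderiv {n : ℕ} (f : Cn n → ℂ) (z : Cn n) : ℂ := fderiv ℂ f z z

def mob {n : ℕ} (a z : Cn n) : ℝ :=
  (1 - ‖a‖ ^ 2) * (1 - ‖z‖ ^ 2) / ‖(1 : ℂ) - bdot z a‖ ^ 2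

def rho {n : ℕ} (z w : Cn n) : ℝ := Real.sqrt (1 - mob z w)

def bergDist {n : ℕ} (z w : Cn n) : ℝ :=
  (1 / 2) * Real.log ((1 + rho z w) / (1 - rho z w))

def bergBall {n : ℕ} (a : Cn n) (r : ℝ) : Set (Cn n) := {w ∈ B n | bergDist a w < r}

def IsCarleson (n : ℕ) (lam γ : ℝ) (μ : Measure (Cn n)) : Prop :=
  ∀ p q : ℝ, 0 < p → 0 < q → q / p = lam →
    ∃ C > 0, ∀ f : Cn n → ℂ, InBergman n p γ f →
      ∫ z, ‖f z‖ ^ q ∂μ ≤ C * bNorm n p γ f ^ q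

def blochSet (n : ℕ) (α : ℝ) (f : Cn n → ℂ) : Set ℝ :=
  {x | ∃ z ∈ B n, x = ‖rderiv f z‖ * (1 - ‖z‖ ^ 2) ^ α}

def blochNorm (n : ℕ) (α : ℝ) (f : Cn n → ℂ) : ℝ := sSup (blochSet n α f)

def InBloch (n : ℕ) (α : ℝ) (f : Cn n → ℂ) : Prop :=
  Hol f ∧ BddAbove (blochSet n α f)

def Fint (n : ℕ) (p q s : ℝ) (f : Cn n → ℂ) (a : Cn n) : ℝ :=
  ∫ z in B n, ‖rderiv f z‖ ^ p * (1 - ‖z‖ ^ 2) ^ q * mob a z ^ s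

def FSet (n : ℕ) (p q s : ℝ) (f : Cn n → ℂ) : Set ℝ :=
  {x | ∃ a ∈ B n, x = Fint n p q s f a}

def FNorm (n : ℕ) (p q s : ℝ) (f : Cn n → ℂ) : ℝ := sSup (FSet n p q s f) ^ (1 / p)

def InF (n : ℕ) (p q s : ℝ) (f : Cn n → ℂ) : Prop :=
  Hol f ∧ BddAbove (FSet n p q s f)

def toeplitz (n : ℕ) (β : ℝ) (μ : Measure (Cn n)) (f : Cn n → ℂ) (z : Cn n) : ℂ :=
  ∫ w, f w / ((1 : ℂ) - bdot z w) ^ ((((n : ℝ) + 1 + β : ℝ)) : ℂ) ∂μ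

def carlSet (n : ℕ) (p q γ : ℝ) (μ : Measure (Cn n)) : Set ℝ :=
  {x | ∃ f : Cn n → ℂ, InBergman n p γ f ∧ bNorm n p γ f ≤ 1 ∧ x = ∫ z, ‖f z‖ ^ q ∂μ}

lemma hB (n : ℕ) : MeasurableSet (B n) := measurableSet_ball

lemma mem_B_pos {n : ℕ} {z : Cn n} (hz : z ∈ B n) : 0 < 1 - ‖z‖ ^ 2 := by
  have : ‖z‖ < 1 := by simpa [B, dist_eq_norm] using hz
  nlinarith [norm_nonneg z]

lemma dens_meas (n : ℕ) (α : ℝ) :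
    Measurable fun z : Cn n => ENNReal.ofReal ((1 - ‖z‖ ^ 2) ^ α) :=
  ((measurable_const.sub ((measurable_norm).pow_const 2)).pow measurable_const).ennreal_ofReal

lemma vol_lintegral {n : ℕ} (α : ℝ) {h : Cn n → ℝ} (h0 : ∀ z, 0 ≤ h z)
    (hm : AEMeasurable h (volume.restrict (B n))) :
    ∫⁻ z, ENNReal.ofReal (h z) ∂(vol n α)
      = ∫⁻ z in B n, ENNReal.ofReal (h z * (1 - ‖z‖ ^ 2) ^ α) := by
  rw [vol, lintegral_withDensity_eq_lintegral_mul₀ (dens_meas n α).aemeasurable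
    hm.ennreal_ofReal]
  refine lintegral_congr_ae ((ae_restrict_mem (hB n)).mono fun z _ => ?_)
  simp only [Pi.mul_apply]
  rw [mul_comm, ← ENNReal.ofReal_mul (h0 z)]

lemma hol_cont {n : ℕ} {f : Cn n → ℂ} (hf : Hol f) (q : ℝ) (hq : 0 ≤ q) :
    ContinuousOn (fun z => ‖f z‖ ^ q) (B n) :=
  (hf.continuousOn.norm).rpow_const fun _ _ => Or.inr hq

lemma weight_cont (n : ℕ) (c : ℝ) :
    ContinuousOn (fun z : Cn n => (1 - ‖z‖ ^ 2) ^ c) (B n) :=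
  ((continuous_const.sub (continuous_norm.pow 2)).continuousOn).rpow_const
    fun _ hz => Or.inl (mem_B_pos hz).ne'

theorem stmt1 (n : ℕ) (p₁ p₂ α₁ α₂ lam γ : ℝ)
    (hp₁ : 0 < p₁) (hp₂ : 0 < p₂) (hα₁ : -1 < α₁) (hα₂ : -1 < α₂)
    (hlam : lam = 1 / p₁ + 1 / p₂)
    (hγ : γ = (1 / lam) * (α₁ / p₁ + α₂ / p₂)) :
    ∃ C > 0, ∀ f g : Cn n → ℂ, InBergman n p₁ α₁ f → InBergman n p₂ α₂ g →
      InBergman n (1 / lam) γ (fun z => f z * g z) ∧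
      bNorm n (1 / lam) γ (fun z => f z * g z) ≤
        C * bNorm n p₁ α₁ f * bNorm n p₂ α₂ g := by
  have hlam0 : 0 < lam := by rw [hlam]; positivity
  set p : ℝ := 1 / lam with hpdef
  have hp0 : 0 < p := by rw [hpdef]; positivity
  set r : ℝ := p₁ * lam with hrdef
  set s : ℝ := p₂ * lam with hsdef
  have hr1 : 1 < r := by
    rw [hrdef, hlam, mul_add, mul_one_div, div_self hp₁.ne']
    have := div_pos hp₁ hp₂
    rw [mul_one_div]; linarith
  have hr0 : 0 < r := lt_trans one_pos hr1
  have hs0 : 0 < s := by rw [hsdef]; positivity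
  have hconj : r.HolderConjugate s := by
    refine Real.holderConjugate_iff.mpr ⟨hr1, ?_⟩
    rw [hrdef, hsdef, hlam]
    field_simp
  set e₁ : ℝ := α₁ / (p₁ * lam) with he₁def
  set e₂ : ℝ := α₂ / (p₂ * lam) with he₂def
  have hpr : p * r = p₁ := by rw [hpdef, hrdef]; field_simp
  have hps : p * s = p₂ := by rw [hpdef, hsdef]; field_simp
  have he₁r : e₁ * r = α₁ := by rw [he₁def, hrdef]; field_simp
  have he₂s : e₂ * s = α₂ := by rw [he₂def, hsdef]; field_simp
  have hγ' : γ = e₁ + e₂ := by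
    rw [hγ, he₁def, he₂def, hpdef]; field_simp [hlam0.ne', hp₁.ne', hp₂.ne']
  -- package for a Bergman function
  have pack : ∀ (q α : ℝ), 0 < q → ∀ f : Cn n → ℂ, InBergman n q α f →
      (∫⁻ z in B n, ENNReal.ofReal (‖f z‖ ^ q * (1 - ‖z‖ ^ 2) ^ α)) ≠ ⊤ ∧
      ∫ z, ‖f z‖ ^ q ∂(vol n α) =
        (∫⁻ z in B n, ENNReal.ofReal (‖f z‖ ^ q * (1 - ‖z‖ ^ 2) ^ α)).toReal := by
    intro q α hq f hf
    have h0 : ∀ z, 0 ≤ ‖f z‖ ^ q := fun z => Real.rpow_nonneg (norm_nonneg _) q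
    have hm : AEMeasurable (fun z => ‖f z‖ ^ q) (volume.restrict (B n)) :=
      (hol_cont hf.1 q hq.le).aemeasurable (hB n)
    have heq := vol_lintegral α h0 hm
    have hfin := (hasFiniteIntegral_iff_ofReal (Filter.Eventually.of_forall h0)).1
      hf.2.hasFiniteIntegral
    constructor
    · rw [← heq]; exact hfin.ne
    · rw [integral_eq_lintegral_of_nonneg_ae (Filter.Eventually.of_forall h0)
        hf.2.aestronglyMeasurable, heq]
  refine ⟨1, one_pos, fun f g hf hg => ?_⟩
  obtain ⟨hAfin, hAint⟩ := pack p₁ α₁ hp₁ f hf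
  obtain ⟨hBfin, hBint⟩ := pack p₂ α₂ hp₂ g hg
  set A := ∫⁻ z in B n, ENNReal.ofReal (‖f z‖ ^ p₁ * (1 - ‖z‖ ^ 2) ^ α₁) with hAdef
  set Bv := ∫⁻ z in B n, ENNReal.ofReal (‖g z‖ ^ p₂ * (1 - ‖z‖ ^ 2) ^ α₂) with hBdef
  set φ : Cn n → ENNReal := fun z => ENNReal.ofReal (‖f z‖ ^ p * (1 - ‖z‖ ^ 2) ^ e₁) with hφdef
  set ψ : Cn n → ENNReal := fun z => ENNReal.ofReal (‖g z‖ ^ p * (1 - ‖z‖ ^ 2) ^ e₂) with hψdef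
  have hφm : AEMeasurable φ (volume.restrict (B n)) :=
    (((hol_cont hf.1 p hp0.le).mul (weight_cont n e₁)).aemeasurable (hB n)).ennreal_ofReal
  have hψm : AEMeasurable ψ (volume.restrict (B n)) :=
    (((hol_cont hg.1 p hp0.le).mul (weight_cont n e₂)).aemeasurable (hB n)).ennreal_ofReal
  have hφr : (∫⁻ z in B n, φ z ^ r) = A := by
    refine lintegral_congr_ae ((ae_restrict_mem (hB n)).mono fun z hz => ?_)
    have hb := mem_B_pos hz
    show ENNReal.ofReal (‖f z‖ ^ p * (1 - ‖z‖ ^ 2) ^ e₁) ^ r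
        = ENNReal.ofReal (‖f z‖ ^ p₁ * (1 - ‖z‖ ^ 2) ^ α₁)
    rw [ENNReal.ofReal_rpow_of_nonneg
      (mul_nonneg (Real.rpow_nonneg (norm_nonneg _) _) (Real.rpow_nonneg hb.le _)) hr0.le,
      Real.mul_rpow (Real.rpow_nonneg (norm_nonneg _) _) (Real.rpow_nonneg hb.le _),
      ← Real.rpow_mul (norm_nonneg _), ← Real.rpow_mul hb.le, hpr, he₁r]
  have hψs : (∫⁻ z in B n, ψ z ^ s) = Bv := by
    refine lintegral_congr_ae ((ae_restrict_mem (hB n)).mono fun z hz => ?_)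
    have hb := mem_B_pos hz
    show ENNReal.ofReal (‖g z‖ ^ p * (1 - ‖z‖ ^ 2) ^ e₂) ^ s
        = ENNReal.ofReal (‖g z‖ ^ p₂ * (1 - ‖z‖ ^ 2) ^ α₂)
    rw [ENNReal.ofReal_rpow_of_nonneg
      (mul_nonneg (Real.rpow_nonneg (norm_nonneg _) _) (Real.rpow_nonneg hb.le _)) hs0.le,
      Real.mul_rpow (Real.rpow_nonneg (norm_nonneg _) _) (Real.rpow_nonneg hb.le _),
      ← Real.rpow_mul (norm_nonneg _), ← Real.rpow_mul hb.le, hps, he₂s]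
  have hmain : (∫⁻ z in B n, ENNReal.ofReal (‖f z * g z‖ ^ p * (1 - ‖z‖ ^ 2) ^ γ))
      ≤ A ^ (1 / r) * Bv ^ (1 / s) := by
    have hstep : (∫⁻ z in B n, ENNReal.ofReal (‖f z * g z‖ ^ p * (1 - ‖z‖ ^ 2) ^ γ))
        = ∫⁻ z in B n, φ z * ψ z := by
      refine lintegral_congr_ae ((ae_restrict_mem (hB n)).mono fun z hz => ?_)
      have hb := mem_B_pos hz
      have : ‖f z * g z‖ ^ p * (1 - ‖z‖ ^ 2) ^ γ
          = (‖f z‖ ^ p * (1 - ‖z‖ ^ 2) ^ e₁) * (‖g z‖ ^ p * (1 - ‖z‖ ^ 2) ^ e₂) := by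
        rw [norm_mul, Real.mul_rpow (norm_nonneg _) (norm_nonneg _), hγ',
          Real.rpow_add hb]
        ring
      show ENNReal.ofReal (‖f z * g z‖ ^ p * (1 - ‖z‖ ^ 2) ^ γ)
          = ENNReal.ofReal (‖f z‖ ^ p * (1 - ‖z‖ ^ 2) ^ e₁)
            * ENNReal.ofReal (‖g z‖ ^ p * (1 - ‖z‖ ^ 2) ^ e₂)
      rw [this, ENNReal.ofReal_mul (mul_nonneg (Real.rpow_nonneg (norm_nonneg _) _)
          (Real.rpow_nonneg hb.le _))]
    rw [hstep, ← hφr, ← hψs]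
    exact ENNReal.lintegral_mul_le_Lp_mul_Lq _ hconj hφm hψm
  have hRfin : A ^ (1 / r) * Bv ^ (1 / s) ≠ ⊤ := by
    exact ENNReal.mul_ne_top
      (ENNReal.rpow_lt_top_of_nonneg (one_div_nonneg.2 hr0.le) hAfin).ne
      (ENNReal.rpow_lt_top_of_nonneg (one_div_nonneg.2 hs0.le) hBfin).ne
  have hprod0 : ∀ z : Cn n, 0 ≤ ‖f z * g z‖ ^ p :=
    fun z => Real.rpow_nonneg (norm_nonneg _) p
  have hprodm : AEMeasurable (fun z => ‖f z * g z‖ ^ p) (volume.restrict (B n)) :=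
    (hol_cont (hf.1.mul hg.1) p hp0.le).aemeasurable (hB n)
  have hprodsm : AEStronglyMeasurable (fun z => ‖f z * g z‖ ^ p) (vol n γ) :=
    AEStronglyMeasurable.mono_ac (withDensity_absolutelyContinuous _ _)
      ((hol_cont (hf.1.mul hg.1) p hp0.le).aestronglyMeasurable (hB n))
  have hL := vol_lintegral (h := fun z => ‖f z * g z‖ ^ p) γ hprod0 hprodm
  have hIprod : Integrable (fun z => ‖f z * g z‖ ^ p) (vol n γ) := by
    refine ⟨hprodsm, (hasFiniteIntegral_iff_ofReal (Filter.Eventually.of_forall hprod0)).2 ?_⟩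
    rw [hL]
    exact lt_of_le_of_lt hmain (lt_top_iff_ne_top.2 hRfin)
  refine ⟨⟨hf.1.mul hg.1, hIprod⟩, ?_⟩
  rw [one_mul]
  unfold bNorm
  rw [integral_eq_lintegral_of_nonneg_ae (Filter.Eventually.of_forall hprod0) hprodsm, hL,
    hAint, hBint]
  calc ((∫⁻ z in B n, ENNReal.ofReal (‖f z * g z‖ ^ p * (1 - ‖z‖ ^ 2) ^ γ)).toReal) ^ (1 / p)
      ≤ ((A ^ (1 / r) * Bv ^ (1 / s)).toReal) ^ (1 / p) := by
        refine Real.rpow_le_rpow ENNReal.toReal_nonneg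
          (ENNReal.toReal_mono hRfin hmain) (one_div_nonneg.2 hp0.le)
    _ = (A.toReal ^ (1 / r) * Bv.toReal ^ (1 / s)) ^ (1 / p) := by
        rw [ENNReal.toReal_mul, ← ENNReal.toReal_rpow, ← ENNReal.toReal_rpow]
    _ = A.toReal ^ (1 / p₁) * Bv.toReal ^ (1 / p₂) := by
        rw [Real.mul_rpow (Real.rpow_nonneg ENNReal.toReal_nonneg _)
          (Real.rpow_nonneg ENNReal.toReal_nonneg _),
          ← Real.rpow_mul ENNReal.toReal_nonneg, ← Real.rpow_mul ENNReal.toReal_nonneg]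
        congr 1
        · congr 1
          rw [← hpr]; field_simp [hr0.ne', hp0.ne']
        · congr 1
          rw [← hps]; field_simp [hs0.ne', hp0.ne']
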